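/- Let p ∈ (1, ∞). If f_n → f in L^p (complex-valued, on a σ-finite measure space), then F_p ∘ f_n → F_p ∘ f in L^{p'}, where p' is the conjugate exponent; i.e., the map f ↦ F_p ∘ f is continuous from L^p to L^{p'}. -/

import Mathlib

open MeasureTheory Filter
open scoped ENNReal NNReal

noncomputable def Fp (p : ℝ) (z : ℂ) : ℂ :=
  if z = 0 then 0 else z * ((‖z‖ ^ (p - 2) : ℝ) : ℂ)

lemma Fp_eq (p : ℝ) (z : ℂ) : Fp p z = z * ((‖z‖ ^ (p - 2) : ℝ) : ℂ) := by
  unfold Fp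
  split_ifs with h
  · simp [h]
  · rfl

lemma Fp_abs {p : ℝ} (hp : 1 < p) (z : ℂ) : ‖Fp p z‖ = ‖z‖ ^ (p - 1) := by
  by_cases h : z = 0
  · simp [Fp, h, Real.zero_rpow (by linarith : p - 1 ≠ 0)]
  · have hz : 0 < ‖z‖ := norm_pos_iff.mpr h
    rw [Fp, if_neg h, norm_mul, Complex.norm_real, Real.norm_eq_abs,
      abs_of_nonneg (Real.rpow_nonneg hz.le _)]
    nth_rewrite 1 [← Real.rpow_one (‖z‖)]
    rw [← Real.rpow_add hz]
    ring_nf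

-- MVT-type lemma
lemma rpow_sub_rpow_le {α r s : ℝ} (hα : 1 ≤ α) (hs : 0 ≤ s) (hsr : s ≤ r) :
    r ^ α - s ^ α ≤ α * r ^ (α - 1) * (r - s) := by
  rcases eq_or_lt_of_le (hs.trans hsr) with h0 | hr
  · have hs0 : s = 0 := le_antisymm (hsr.trans_eq h0.symm) hs
    have hr0 : r = 0 := h0.symm
    rw [hs0, hr0]; simp [Real.zero_rpow (by positivity : α ≠ 0)]
  · set t := s / r with ht
    have ht0 : 0 ≤ t := div_nonneg hs hr.le
    have ht1 : t ≤ 1 := (div_le_one hr).2 hsr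
    have hb : 1 + α * (t - 1) ≤ (1 + (t - 1)) ^ α :=
      one_add_mul_self_le_rpow_one_add (by linarith) hα
    rw [show 1 + (t - 1) = t by ring] at hb
    have h1 : 1 - t ^ α ≤ α * (1 - t) := by linarith
    have h2 : r ^ α * (1 - t ^ α) ≤ r ^ α * (α * (1 - t)) :=
      mul_le_mul_of_nonneg_left h1 (Real.rpow_nonneg hr.le _)
    have h3 : r ^ α * t ^ α = s ^ α := by
      rw [← Real.mul_rpow hr.le ht0, mul_div_cancel₀ _ hr.ne']
    have h4 : r ^ α = r ^ (α - 1) * r := by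
      rw [← Real.rpow_add_one hr.ne' (α - 1), sub_add_cancel]
    have h5 : r * (1 - t) = r - s := by rw [mul_sub, mul_one, mul_div_cancel₀ _ hr.ne']
    have h6 : r ^ α * (α * (1 - t)) = α * r ^ (α - 1) * (r - s) := by
      rw [h4, ← h5]; ring
    linarith

lemma real_rpow_add_le {a b α : ℝ} (ha : 0 ≤ a) (hb : 0 ≤ b) (hα : 0 ≤ α) (hα1 : α ≤ 1) :
    (a + b) ^ α ≤ a ^ α + b ^ α := by
  rw [← Real.coe_toNNReal a ha, ← Real.coe_toNNReal b hb, ← NNReal.coe_add,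
    ← NNReal.coe_rpow, ← NNReal.coe_rpow, ← NNReal.coe_rpow, ← NNReal.coe_add,
    NNReal.coe_le_coe]
  exact NNReal.rpow_add_le_add_rpow _ _ hα hα1

lemma Fp_sub_master {p : ℝ} (hp : 1 < p) (z w : ℂ) (hsr : ‖w‖ ≤ ‖z‖) :
    ∃ e : ℝ, 0 ≤ e ∧ e ≤ 2 * ‖z - w‖ ∧ e ≤ 2 * ‖w‖ ∧
      ‖Fp p z - Fp p w‖ ≤
        (‖z‖ ^ (p - 1) - ‖w‖ ^ (p - 1)) +
          ‖w‖ ^ (p - 2) * e := by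
  by_cases hz0 : z = 0
  · have hw0 : w = 0 := by
      have h1 : ‖w‖ ≤ 0 := hsr.trans_eq (by simp [hz0])
      exact norm_eq_zero.mp (le_antisymm h1 (norm_nonneg w))
    refine ⟨0, le_refl 0, by positivity, by positivity, ?_⟩
    simp [hz0, hw0, Fp]
  set r := ‖z‖ with hr_def
  set s := ‖w‖ with hs_def
  have hr : 0 < r := norm_pos_iff.mpr hz0
  by_cases hs0 : s = 0
  · have hw0 : w = 0 := norm_eq_zero.mp hs0
    refine ⟨0, le_refl 0, by positivity, by positivity, ?_⟩
    rw [hw0, show Fp p 0 = 0 by simp [Fp], sub_zero, Fp_abs hp, hs0,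
      Real.zero_rpow (by linarith : p - 1 ≠ 0)]
    simp [hr_def]
  have hs : 0 < s := lt_of_le_of_ne (norm_nonneg w) (Ne.symm hs0)
  have hw0 : w ≠ 0 := fun h => hs0 (by simp [hs_def, h])
  set u : ℂ := ((s / r : ℝ) : ℂ) * z with hu_def
  have hu_abs : ‖u‖ = s := by
    rw [hu_def, norm_mul, Complex.norm_real, Real.norm_eq_abs, abs_of_nonneg (by positivity),
      div_mul_cancel₀ _ hr.ne']
  have hu0 : u ≠ 0 := by
    rw [hu_def]
    exact mul_ne_zero (by exact_mod_cast (by positivity : (s / r : ℝ) ≠ 0)) hz0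
  set e := ‖u - w‖ with he_def
  have hrs_d : r - s ≤ ‖z - w‖ := by
    rw [hr_def, hs_def]
    exact norm_sub_norm_le z w
  have huz : ‖u - z‖ = r - s := by
    have : u - z = ((s / r - 1 : ℝ) : ℂ) * z := by rw [hu_def]; push_cast; ring
    rw [this, norm_mul, Complex.norm_real, Real.norm_eq_abs, abs_of_nonpos (by
      have : s / r ≤ 1 := (div_le_one hr).2 hsr
      linarith), ← hr_def]
    field_simp
    ring
  have he2d : e ≤ 2 * ‖z - w‖ := by
    have h1 : e ≤ ‖u - z‖ + ‖z - w‖ := norm_sub_le_norm_sub_add_norm_sub u z w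
    rw [huz] at h1
    linarith
  have he2s : e ≤ 2 * s := by
    have : e ≤ ‖u‖ + ‖w‖ := by
      rw [he_def]
      exact norm_sub_le u w
    rw [hu_abs, ← hs_def] at this
    linarith
  refine ⟨e, norm_nonneg _, he2d, he2s, ?_⟩
  have term1 : ‖Fp p z - Fp p u‖ = r ^ (p - 1) - s ^ (p - 1) := by
    have hru1 : r * r ^ (p - 2) = r ^ (p - 1) := by
      nth_rewrite 1 [← Real.rpow_one r]; rw [← Real.rpow_add hr]; ring_nf
    have hsu1 : s * s ^ (p - 2) = s ^ (p - 1) := by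
      nth_rewrite 1 [← Real.rpow_one s]; rw [← Real.rpow_add hs]; ring_nf
    have e1 : Fp p z - Fp p u = z * (((r ^ (p - 2) - s / r * s ^ (p - 2) : ℝ)) : ℂ) := by
      rw [Fp, if_neg hz0, Fp, if_neg hu0, hu_abs, hu_def, ← hr_def]
      push_cast
      ring
    have e2 : r * (r ^ (p - 2) - s / r * s ^ (p - 2)) = r ^ (p - 1) - s ^ (p - 1) := by
      rw [mul_sub, hru1, show r * (s / r * s ^ (p - 2)) = s * s ^ (p - 2) by
        field_simp, hsu1]
    have hmono : s ^ (p - 1) ≤ r ^ (p - 1) := Real.rpow_le_rpow hs.le hsr (by linarith)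
    have hX : 0 ≤ r ^ (p - 2) - s / r * s ^ (p - 2) := by nlinarith [e2]
    rw [e1, norm_mul, Complex.norm_real, Real.norm_eq_abs, ← hr_def, abs_of_nonneg hX]
    exact e2
  have term2 : ‖Fp p u - Fp p w‖ = s ^ (p - 2) * e := by
    have e3 : Fp p u - Fp p w = ((s ^ (p - 2) : ℝ) : ℂ) * (u - w) := by
      rw [Fp, if_neg hu0, Fp, if_neg hw0, hu_abs, ← hs_def]
      ring
    rw [e3, norm_mul, Complex.norm_real, Real.norm_eq_abs, abs_of_nonneg (Real.rpow_nonneg hs.le _), ← he_def]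
  calc ‖Fp p z - Fp p w‖
      ≤ ‖Fp p z - Fp p u‖ + ‖Fp p u - Fp p w‖ :=
        norm_sub_le_norm_sub_add_norm_sub _ _ _
    _ = (r ^ (p - 1) - s ^ (p - 1)) + s ^ (p - 2) * e := by rw [term1, term2]

lemma Fp_lip_A {p : ℝ} (hp : 1 < p) (hp2 : p ≤ 2) (z w : ℂ) :
    ‖Fp p z - Fp p w‖ ≤ 3 * ‖z - w‖ ^ (p - 1) := by
  -- reduce to the case |w| ≤ |z|
  wlog hsr : ‖w‖ ≤ ‖z‖ generalizing z w
  · have h := this w z (le_of_not_ge hsr)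
    rwa [norm_sub_rev (Fp p w), norm_sub_rev w z] at h
  obtain ⟨e, he0, he2d, he2s, hb⟩ := Fp_sub_master hp z w hsr
  set r := ‖z‖
  set s := ‖w‖
  set d := ‖z - w‖ with hd_def
  have hd0 : 0 ≤ d := norm_nonneg _
  have hs0 : 0 ≤ s := norm_nonneg _
  have hα0 : 0 < p - 1 := by linarith
  have hα1 : p - 1 ≤ 1 := by linarith
  have hrsd : r - s ≤ d := by
    have h := norm_sub_norm_le z w
    exact h
  -- term 1 bound
  have t1 : r ^ (p - 1) - s ^ (p - 1) ≤ d ^ (p - 1) := by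
    have h1 : r ^ (p - 1) ≤ (r - s) ^ (p - 1) + s ^ (p - 1) := by
      have := real_rpow_add_le (a := r - s) (b := s) (by linarith) hs0 hα0.le hα1
      rw [sub_add_cancel] at this
      exact this
    have h2 : (r - s) ^ (p - 1) ≤ d ^ (p - 1) :=
      Real.rpow_le_rpow (by linarith) hrsd hα0.le
    linarith
  -- term 2 bound
  have t2 : s ^ (p - 2) * e ≤ 2 * d ^ (p - 1) := by
    rcases eq_or_lt_of_le he0 with he | hepos
    · rw [← he, mul_zero]; positivity
    have hspos : 0 < s := by nlinarith
    have hdpos : 0 < d := by nlinarith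
    have hesplit : e = e ^ (1 - (p - 1)) * e ^ (p - 1) := by
      rw [← Real.rpow_add hepos]
      norm_num
    have h1 : e ^ (1 - (p - 1)) ≤ (2 * s) ^ (1 - (p - 1)) :=
      Real.rpow_le_rpow hepos.le he2s (by linarith)
    have h2 : e ^ (p - 1) ≤ (2 * d) ^ (p - 1) :=
      Real.rpow_le_rpow hepos.le he2d hα0.le
    have h3 : e ≤ (2 * s) ^ (1 - (p - 1)) * (2 * d) ^ (p - 1) := by
      rw [hesplit]
      exact mul_le_mul h1 h2 (Real.rpow_nonneg hepos.le _) (by positivity)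
    have h4 : s ^ (p - 2) * ((2 * s) ^ (1 - (p - 1)) * (2 * d) ^ (p - 1))
        = 2 * d ^ (p - 1) := by
      rw [Real.mul_rpow (by norm_num) hspos.le, Real.mul_rpow (by norm_num) hdpos.le]
      have hss : s ^ (p - 2) * s ^ (1 - (p - 1)) = 1 := by
        rw [← Real.rpow_add hspos, show p - 2 + (1 - (p - 1)) = 0 by ring, Real.rpow_zero]
      have h22 : (2 : ℝ) ^ (1 - (p - 1)) * 2 ^ (p - 1) = 2 := by
        rw [← Real.rpow_add (by norm_num : (0:ℝ) < 2), show 1 - (p-1) + (p-1) = 1 by ring,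
          Real.rpow_one]
      calc s ^ (p - 2) * (2 ^ (1 - (p - 1)) * s ^ (1 - (p - 1)) * (2 ^ (p - 1) * d ^ (p - 1)))
          = (s ^ (p - 2) * s ^ (1 - (p - 1))) * ((2 : ℝ) ^ (1 - (p - 1)) * 2 ^ (p - 1))
            * d ^ (p - 1) := by ring
        _ = 2 * d ^ (p - 1) := by rw [hss, h22]; ring
    calc s ^ (p - 2) * e ≤ s ^ (p - 2) * ((2 * s) ^ (1 - (p - 1)) * (2 * d) ^ (p - 1)) :=
          mul_le_mul_of_nonneg_left h3 (Real.rpow_nonneg hspos.le _)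
      _ = 2 * d ^ (p - 1) := h4
  linarith

lemma Fp_lip_B {p : ℝ} (hp2 : 2 < p) (z w : ℂ) :
    ‖Fp p z - Fp p w‖ ≤
      (p + 1) * (‖z‖ + ‖w‖) ^ (p - 2) * ‖z - w‖ := by
  wlog hsr : ‖w‖ ≤ ‖z‖ generalizing z w
  · have h := this w z (le_of_not_ge hsr)
    rwa [norm_sub_rev (Fp p w), norm_sub_rev w z, add_comm (‖w‖)] at h
  have hp : 1 < p := by linarith
  obtain ⟨e, he0, he2d, he2s, hb⟩ := Fp_sub_master hp z w hsr
  set r := ‖z‖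
  set s := ‖w‖
  set d := ‖z - w‖ with hd_def
  have hd0 : 0 ≤ d := norm_nonneg _
  have hs0 : 0 ≤ s := norm_nonneg _
  have hr0 : 0 ≤ r := norm_nonneg _
  have hrsd : r - s ≤ d := by
    have h := norm_sub_norm_le z w
    exact h
  have hmono : ∀ a : ℝ, 0 ≤ a → a ≤ r + s → a ^ (p - 2) ≤ (r + s) ^ (p - 2) :=
    fun a ha har => Real.rpow_le_rpow ha har (by linarith)
  have t1 : r ^ (p - 1) - s ^ (p - 1) ≤ (p - 1) * (r + s) ^ (p - 2) * d := by
    have h1 : r ^ (p - 1) - s ^ (p - 1) ≤ (p - 1) * r ^ (p - 1 - 1) * (r - s) :=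
      rpow_sub_rpow_le (by linarith) hs0 hsr
    have h2 : r ^ (p - 1 - 1) ≤ (r + s) ^ (p - 2) := by
      rw [show p - 1 - 1 = p - 2 by ring]
      exact hmono r hr0 (by linarith)
    have h3 : (p - 1) * r ^ (p - 1 - 1) * (r - s) ≤ (p - 1) * (r + s) ^ (p - 2) * d := by
      have hrp : 0 ≤ r ^ (p - 1 - 1) := Real.rpow_nonneg hr0 _
      have := mul_le_mul h2 hrsd (by linarith) (Real.rpow_nonneg (by linarith) _)
      nlinarith [Real.rpow_nonneg (show (0:ℝ) ≤ r + s by linarith) (p - 2)]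
    linarith
  have t2 : s ^ (p - 2) * e ≤ 2 * (r + s) ^ (p - 2) * d := by
    have h1 : s ^ (p - 2) ≤ (r + s) ^ (p - 2) := hmono s hs0 (by linarith)
    have h2 : s ^ (p - 2) * e ≤ (r + s) ^ (p - 2) * (2 * d) :=
      mul_le_mul h1 he2d he0 (Real.rpow_nonneg (by linarith) _)
    linarith
  calc ‖Fp p z - Fp p w‖ ≤ (r ^ (p - 1) - s ^ (p - 1)) + s ^ (p - 2) * e := hb
    _ ≤ (p - 1) * (r + s) ^ (p - 2) * d + 2 * (r + s) ^ (p - 2) * d := by linarith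
    _ = (p + 1) * (r + s) ^ (p - 2) * d := by ring

lemma Fp_measurable (p : ℝ) : Measurable (Fp p) := by
  have h : Fp p = fun z => z * ((‖z‖ ^ (p - 2) : ℝ) : ℂ) := funext (Fp_eq p)
  rw [h]
  exact measurable_id.mul
    (Complex.continuous_ofReal.measurable.comp
      ((continuous_norm.measurable).pow measurable_const))

theorem Fp_continuous_Lp_to_Lp' (p p' : ℝ) (hp : 1 < p) (hp' : p' = p / (p - 1))
    {Ω : Type*} [MeasurableSpace Ω] (μ : Measure Ω) [SigmaFinite μ]
    (f : Ω → ℂ) (fn : ℕ → Ω → ℂ)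
    (hf : MemLp f (ENNReal.ofReal p) μ)
    (hfn : ∀ n, MemLp (fn n) (ENNReal.ofReal p) μ)
    (hconv : Tendsto (fun n => eLpNorm (fn n - f) (ENNReal.ofReal p) μ) atTop (nhds 0)) :
    Tendsto (fun n => eLpNorm ((fun x => Fp p (fn n x)) - fun x => Fp p (f x))
      (ENNReal.ofReal p') μ) atTop (nhds 0) := by
  have hp0 : 0 < p := by linarith
  have hp'0 : 0 < p' := by rw [hp']; exact div_pos hp0 (by linarith)
  rcases le_or_gt p 2 with hp2 | hp2
  · -- case 1 < p ≤ 2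
    have key : ∀ n, eLpNorm ((fun x => Fp p (fn n x)) - fun x => Fp p (f x))
        (ENNReal.ofReal p') μ
        ≤ 3 * (eLpNorm (fn n - f) (ENNReal.ofReal p) μ) ^ (p - 1) := by
      intro n
      have step1 : eLpNorm ((fun x => Fp p (fn n x)) - fun x => Fp p (f x))
          (ENNReal.ofReal p') μ
          ≤ eLpNorm (fun x => (3 : ℝ) • ‖(fn n - f) x‖ ^ (p - 1)) (ENNReal.ofReal p') μ := by
        apply eLpNorm_mono
        intro x
        simp only [Pi.sub_apply]
        rw [Real.norm_eq_abs, smul_eq_mul,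
          abs_of_nonneg (by positivity)]
        have h := Fp_lip_A hp hp2 (fn n x) (f x)
        exact h
      have step2 : eLpNorm (fun x => (3 : ℝ) • ‖(fn n - f) x‖ ^ (p - 1))
          (ENNReal.ofReal p') μ
          = (‖(3 : ℝ)‖₊ : ℝ≥0∞) *
            eLpNorm (fun x => ‖(fn n - f) x‖ ^ (p - 1)) (ENNReal.ofReal p') μ :=
        eLpNorm_const_smul (3 : ℝ) _ _ _
      have step3 : eLpNorm (fun x => ‖(fn n - f) x‖ ^ (p - 1)) (ENNReal.ofReal p') μ
          = eLpNorm (fn n - f) (ENNReal.ofReal p' * ENNReal.ofReal (p - 1)) μ ^ (p - 1) :=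
        eLpNorm_norm_rpow _ (by linarith)
      have step4 : ENNReal.ofReal p' * ENNReal.ofReal (p - 1) = ENNReal.ofReal p := by
        rw [← ENNReal.ofReal_mul hp'0.le]
        congr 1
        rw [hp', div_mul_cancel₀ p (by linarith : p - 1 ≠ 0)]
      have h3 : (‖(3 : ℝ)‖₊ : ℝ≥0∞) = 3 := by
        simp [Real.nnnorm_ofNat]
      calc eLpNorm ((fun x => Fp p (fn n x)) - fun x => Fp p (f x)) (ENNReal.ofReal p') μ
          ≤ _ := step1
        _ = 3 * (eLpNorm (fn n - f) (ENNReal.ofReal p) μ) ^ (p - 1) := by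
            rw [step2, step3, step4, h3]
    have hlim : Tendsto (fun n => 3 * (eLpNorm (fn n - f) (ENNReal.ofReal p) μ) ^ (p - 1))
        atTop (nhds 0) := by
      have h1 : Tendsto (fun n => (eLpNorm (fn n - f) (ENNReal.ofReal p) μ) ^ (p - 1))
          atTop (nhds ((0 : ℝ≥0∞) ^ (p - 1))) :=
        (ENNReal.continuous_rpow_const.tendsto 0).comp hconv
      rw [ENNReal.zero_rpow_of_pos (by linarith)] at h1
      have h2 := ENNReal.Tendsto.const_mul h1 (Or.inr (by norm_num : (3 : ℝ≥0∞) ≠ ⊤))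
      rwa [mul_zero] at h2
    exact tendsto_of_tendsto_of_tendsto_of_le_of_le' tendsto_const_nhds hlim
      (Eventually.of_forall fun n => zero_le) (Eventually.of_forall key)
  · -- case 2 < p
    set q := ENNReal.ofReal p with hq_def
    set q' := ENNReal.ofReal p' with hq'_def
    set rr := ENNReal.ofReal (p / (p - 2)) with hrr_def
    have hq1 : (1 : ℝ≥0∞) ≤ q := by
      rw [hq_def, ENNReal.one_le_ofReal]; linarith
    have hmf : AEStronglyMeasurable f μ := hf.1
    have hpqr : 1 / q' = 1 / rr + 1 / q := by
      rw [hq'_def, hrr_def, hq_def, one_div, one_div, one_div,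
        ← ENNReal.ofReal_inv_of_pos hp'0,
        ← ENNReal.ofReal_inv_of_pos (div_pos hp0 (by linarith) : (0:ℝ) < p / (p - 2)),
        ← ENNReal.ofReal_inv_of_pos hp0,
        ← ENNReal.ofReal_add (inv_nonneg.2 (div_pos hp0 (by linarith)).le) (inv_nonneg.2 hp0.le)]
      congr 1
      rw [hp']
      rw [inv_div, inv_div]
      field_simp
      ring
    have key : ∀ n, eLpNorm ((fun x => Fp p (fn n x)) - fun x => Fp p (f x)) q' μ
        ≤ ENNReal.ofReal (p + 1) * (eLpNorm (fn n) q μ + eLpNorm f q μ) ^ (p - 2)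
            * eLpNorm (fn n - f) q μ := by
      intro n
      set ψ : Ω → ℝ := fun x => ‖fn n x‖ + ‖f x‖ with hψ_def
      have hψ0 : ∀ x, 0 ≤ ψ x := fun x => by positivity
      set φ : Ω → ℝ := fun x => (p + 1) * ψ x ^ (p - 2) with hφ_def
      have hψm : AEStronglyMeasurable ψ μ := (hfn n).1.norm.add hmf.norm
      have hφm : AEStronglyMeasurable φ μ := by
        have h1 : AEMeasurable (fun x => ψ x ^ (p - 2)) μ :=
          hψm.aemeasurable.pow aemeasurable_const
        exact (h1.const_mul (p + 1)).aestronglyMeasurable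
      have hgm : AEStronglyMeasurable (fn n - f) μ := (hfn n).1.sub hmf
      have step1 : eLpNorm ((fun x => Fp p (fn n x)) - fun x => Fp p (f x)) q' μ
          ≤ eLpNorm (φ • (fn n - f)) q' μ := by
        apply eLpNorm_mono
        intro x
        have hφx : 0 ≤ φ x := mul_nonneg (by linarith) (Real.rpow_nonneg (hψ0 x) _)
        have hx : (φ • (fn n - f)) x = φ x • (fn n x - f x) := rfl
        simp only [Pi.sub_apply]
        rw [hx, norm_smul, Real.norm_eq_abs, abs_of_nonneg hφx]
        have h := Fp_lip_B hp2 (fn n x) (f x)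
        simp only [hφ_def, hψ_def, mul_assoc] at h ⊢
        exact h
      have step2 : eLpNorm (φ • (fn n - f)) q' μ ≤ eLpNorm φ rr μ * eLpNorm (fn n - f) q μ :=
        eLpNorm_smul_le_mul_eLpNorm hgm hφm (hpqr := ⟨by simpa [one_div] using hpqr.symm⟩)
      have step3 : eLpNorm φ rr μ
          ≤ ENNReal.ofReal (p + 1) * (eLpNorm (fn n) q μ + eLpNorm f q μ) ^ (p - 2) := by
        have e1 : eLpNorm φ rr μ = (‖(p + 1 : ℝ)‖₊ : ℝ≥0∞) *
            eLpNorm (fun x => ψ x ^ (p - 2)) rr μ := by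
          have : φ = (p + 1 : ℝ) • fun x => ψ x ^ (p - 2) := by
            funext x; simp [hφ_def]
          rw [this, eLpNorm_const_smul, enorm_eq_nnnorm]
        have e2 : eLpNorm (fun x => ψ x ^ (p - 2)) rr μ
            = eLpNorm ψ (rr * ENNReal.ofReal (p - 2)) μ ^ (p - 2) := by
          have h := eLpNorm_norm_rpow (p := rr) (μ := μ) ψ (by linarith : (0:ℝ) < p - 2)
          have heq : (fun x => ‖ψ x‖ ^ (p - 2)) = fun x => ψ x ^ (p - 2) := by
            funext x; rw [Real.norm_of_nonneg (hψ0 x)]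
          rwa [heq] at h
        have e3 : rr * ENNReal.ofReal (p - 2) = q := by
          rw [hrr_def, hq_def, ← ENNReal.ofReal_mul (div_pos hp0 (by linarith)).le,
            div_mul_cancel₀ p (by linarith : p - 2 ≠ 0)]

        have e4 : eLpNorm ψ q μ ≤ eLpNorm (fn n) q μ + eLpNorm f q μ := by
          have h := eLpNorm_add_le (ε := ℝ) (hfn n).1.norm hmf.norm hq1
          rw [eLpNorm_norm, eLpNorm_norm] at h
          exact h
        have e5 : eLpNorm ψ q μ ^ (p - 2) ≤ (eLpNorm (fn n) q μ + eLpNorm f q μ) ^ (p - 2) :=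
          ENNReal.rpow_le_rpow e4 (by linarith)
        have e6 : (‖(p + 1 : ℝ)‖₊ : ℝ≥0∞) = ENNReal.ofReal (p + 1) := by
          rw [← Real.enorm_eq_ofReal (by linarith : (0:ℝ) ≤ p + 1), enorm_eq_nnnorm]
        calc eLpNorm φ rr μ
            = (‖(p + 1 : ℝ)‖₊ : ℝ≥0∞) * eLpNorm (fun x => ψ x ^ (p - 2)) rr μ := e1
          _ = ENNReal.ofReal (p + 1) * eLpNorm ψ q μ ^ (p - 2) := by rw [e6, e2, e3]
          _ ≤ ENNReal.ofReal (p + 1) * (eLpNorm (fn n) q μ + eLpNorm f q μ) ^ (p - 2) :=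
              mul_le_mul_right e5 _
      calc eLpNorm ((fun x => Fp p (fn n x)) - fun x => Fp p (f x)) q' μ
          ≤ eLpNorm φ rr μ * eLpNorm (fn n - f) q μ := step1.trans step2
        _ ≤ ENNReal.ofReal (p + 1) * (eLpNorm (fn n) q μ + eLpNorm f q μ) ^ (p - 2)
            * eLpNorm (fn n - f) q μ := mul_le_mul_left step3 _
    -- uniform bound on the norms
    set M : ℝ≥0∞ := 1 + eLpNorm f q μ + eLpNorm f q μ with hM_def
    have hM : M ≠ ⊤ := by
      rw [hM_def]
      have := hf.2
      rw [hq_def] at this ⊢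
      finiteness
    have hbound : ∀ᶠ n in atTop, eLpNorm (fn n) q μ + eLpNorm f q μ ≤ M := by
      have h1 : ∀ᶠ n in atTop, eLpNorm (fn n - f) q μ < 1 :=
        hconv.eventually (gt_mem_nhds (by norm_num))
      filter_upwards [h1] with n hn
      have h2 : eLpNorm (fn n) q μ ≤ eLpNorm (fn n - f) q μ + eLpNorm f q μ := by
        have h := eLpNorm_add_le ((hfn n).1.sub hmf) hmf hq1
        rwa [sub_add_cancel] at h
      calc eLpNorm (fn n) q μ + eLpNorm f q μ
          ≤ (eLpNorm (fn n - f) q μ + eLpNorm f q μ) + eLpNorm f q μ :=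
            add_le_add_left h2 _
        _ ≤ M := by
            rw [hM_def]
            exact add_le_add_left (add_le_add_left hn.le _) _
    set K : ℝ≥0∞ := ENNReal.ofReal (p + 1) * M ^ (p - 2) with hK_def
    have hK : K ≠ ⊤ := by
      rw [hK_def]
      exact ENNReal.mul_ne_top ENNReal.ofReal_ne_top
        (ENNReal.rpow_ne_top_of_nonneg (by linarith) hM)
    have hKlim : Tendsto (fun n => K * eLpNorm (fn n - f) q μ) atTop (nhds 0) := by
      have h : Tendsto (fun n => K * eLpNorm (fn n - f) q μ) atTop (nhds (K * 0)) :=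
        ENNReal.Tendsto.const_mul hconv (Or.inr hK)
      rwa [mul_zero] at h
    refine tendsto_of_tendsto_of_tendsto_of_le_of_le' tendsto_const_nhds hKlim
      (Eventually.of_forall fun n => zero_le) ?_
    filter_upwards [hbound] with n hn
    calc eLpNorm ((fun x => Fp p (fn n x)) - fun x => Fp p (f x)) q' μ
        ≤ ENNReal.ofReal (p + 1) * (eLpNorm (fn n) q μ + eLpNorm f q μ) ^ (p - 2)
            * eLpNorm (fn n - f) q μ := key n
      _ ≤ K * eLpNorm (fn n - f) q μ := by
          rw [hK_def]
          exact mul_le_mul_left (mul_le_mul_right (ENNReal.rpow_le_rpow hn (by linarith)) _) _
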